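/- For a positive integer m, the quotient (2^{2m} + 2^m + 1) / 21 is an integer if and only if m = 2n for some positive integer n not divisible by 3. -/
import Mathlib


theorem stmt_7 (m : ℕ) (hm : 0 < m) :
    21 ∣ 2 ^ (2 * m) + 2 ^ m + 1 ↔ ∃ n : ℕ, 0 < n ∧ ¬ (3 ∣ n) ∧ m = 2 * n := by
  have h2 : (2 : ZMod 21) ^ 6 = 1 := by decide
  have key : 21 ∣ 2 ^ (2 * m) + 2 ^ m + 1 ↔ m % 6 = 2 ∨ m % 6 = 4 := by
    rw [show (21 : ℕ) ∣ 2 ^ (2 * m) + 2 ^ m + 1 ↔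
        ((2 ^ (2 * m) + 2 ^ m + 1 : ℕ) : ZMod 21) = 0 from
      (ZMod.natCast_eq_zero_iff _ _).symm]
    push_cast
    have hpow : ∀ k : ℕ, (2 : ZMod 21) ^ k = 2 ^ (k % 6) := by
      intro k
      conv_lhs => rw [← Nat.div_add_mod k 6]
      rw [pow_add, pow_mul, h2, one_pow, one_mul]
    rw [hpow (2 * m), hpow m]
    have hmod : (2 * m) % 6 = 2 * (m % 6) % 6 := by omega
    rw [hmod]
    have h6 : m % 6 < 6 := Nat.mod_lt m (by norm_num)
    interval_cases h : m % 6 <;> decide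
  rw [key]
  constructor
  · intro h
    exact ⟨m / 2, by omega, by omega, by omega⟩
  · rintro ⟨n, hn, h3, rfl⟩
    omega
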